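/- Let $Q = 10^{n_a/20} e^{-j n_p}$ with $n_a$ uniform on $[-\delta/2,\delta/2]$ and $n_p$ uniform on $[-\pi/2^B, \pi/2^B]$, independent. Then $\mathbb{E}[|1 - Q|^2] = 1 - 2 P A_1 + A_2$, where $P, A_1, A_2$ are defined as $P = \frac{2^B}{\pi}\sin(\pi/2^B)$, $A_1 = \frac{20}{\delta\ln 10}(10^{\delta/40}-10^{-\delta/40})$, $A_2 = \frac{10}{\delta\ln 10}(10^{\delta/20}-10^{-\delta/20})$. -/

import Mathlib

open Real MeasureTheory intervalIntegral

/-- Per-tap irreducible residual power: with `Q = 10^{n_a/20} e^{-j n_p}`, independent `n_a`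
uniform on `[-δ/2, δ/2]` and `n_p` uniform on `[-π/2^B, π/2^B]`,
`𝔼[|1 - Q|²] = 1 - 2 P A₁ + A₂` (expectation written as averaged double integral). -/
theorem expected_one_minus_Q_sq (δ : ℝ) (hδ : 0 < δ) (B : ℕ) (hB : 1 ≤ B) :
    (δ⁻¹ * (2 * π / 2 ^ B)⁻¹) *
        ∫ a in (-(δ/2))..(δ/2), ∫ p in (-(π / 2 ^ B))..(π / 2 ^ B),
          Complex.normSq
            (1 - (((10 : ℝ) ^ (a / 20) : ℝ) : ℂ) * Complex.exp (-(Complex.I * p))) =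
      1 - 2 * (2 ^ B / π * Real.sin (π / 2 ^ B)) *
          (20 / (δ * Real.log 10) * ((10 : ℝ) ^ (δ/40) - (10 : ℝ) ^ (-(δ/40)))) +
        10 / (δ * Real.log 10) * ((10 : ℝ) ^ (δ/20) - (10 : ℝ) ^ (-(δ/20))) := by
  set c : ℝ := π / 2 ^ B with hc
  set k : ℝ := Real.log 10 with hk
  have hkpos : 0 < k := Real.log_pos (by norm_num)
  have hcpos : 0 < c := div_pos Real.pi_pos (by positivity)
  -- pointwise normSq
  have hns : ∀ r p : ℝ, Complex.normSq (1 - (r:ℂ) * Complex.exp (-(Complex.I * p)))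
      = 1 - 2*r*Real.cos p + r^2 := by
    intro r p
    rw [show -(Complex.I * (p:ℂ)) = ((-p : ℝ):ℂ) * Complex.I by push_cast; ring, Complex.exp_mul_I]
    simp [Complex.normSq_apply, Complex.cos_ofReal_re, Complex.sin_ofReal_re]
    nlinarith [Real.sin_sq_add_cos_sq p]
  have hrpow : ∀ a : ℝ, (10:ℝ) ^ (a/20) = Real.exp ((k/20)*a) := by
    intro a
    rw [Real.rpow_def_of_pos (by norm_num), hk]
    ring_nf
  -- inner integral
  have hinner : ∀ a : ℝ, (∫ p in (-c)..c,
      Complex.normSq (1 - (((10 : ℝ) ^ (a / 20) : ℝ) : ℂ) * Complex.exp (-(Complex.I * p))))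
      = (2*c) + (2*c)*Real.exp ((k/10)*a) + (-(4*Real.sin c))*Real.exp ((k/20)*a) := by
    intro a
    rw [show ((10:ℝ)^(a/20)) = Real.exp ((k/20)*a) from hrpow a]
    set r : ℝ := Real.exp ((k/20)*a) with hr
    have h1 : (fun p : ℝ => Complex.normSq (1 - (r:ℂ) * Complex.exp (-(Complex.I * p))))
        = fun p : ℝ => (1 + r^2) + (-(2*r)) * Real.cos p := by
      funext p; rw [hns r p]; ring
    have hr2 : r^2 = Real.exp ((k/10)*a) := by
      rw [pow_two, hr, ← Real.exp_add]; congr 1; ring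
    rw [h1, intervalIntegral.integral_add intervalIntegrable_const
        (intervalIntegrable_cos.const_mul _),
        intervalIntegral.integral_const, intervalIntegral.integral_const_mul,
        integral_cos, Real.sin_neg, hr2]
    simp only [smul_eq_mul]
    ring
  simp only [hinner]
  -- exp integrals
  have hexp : ∀ m : ℝ, m ≠ 0 → (∫ a in (-(δ/2))..(δ/2), Real.exp (m*a))
      = m⁻¹ * (Real.exp (m*(δ/2)) - Real.exp (-(m*(δ/2)))) := by
    intro m hm
    rw [intervalIntegral.integral_comp_mul_left (fun x => Real.exp x) hm]
    simp [mul_comm]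
  have i1 : IntervalIntegrable (fun a => (2*c)*Real.exp ((k/10)*a)) volume (-(δ/2)) (δ/2) :=
    Continuous.intervalIntegrable (by continuity) _ _
  have i2 : IntervalIntegrable (fun a => (-(4*Real.sin c))*Real.exp ((k/20)*a)) volume (-(δ/2)) (δ/2) :=
    Continuous.intervalIntegrable (by continuity) _ _
  rw [intervalIntegral.integral_add (intervalIntegrable_const.add i1) i2,
      intervalIntegral.integral_add intervalIntegrable_const i1,
      intervalIntegral.integral_const, intervalIntegral.integral_const_mul,
      intervalIntegral.integral_const_mul,
      hexp (k/10) (by positivity), hexp (k/20) (by positivity)]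
  -- rewrite RHS rpow's as exp
  have e1 : (10:ℝ) ^ (δ/40) = Real.exp ((k/20)*(δ/2)) := by
    rw [Real.rpow_def_of_pos (by norm_num), hk]; ring_nf
  have e2 : (10:ℝ) ^ (-(δ/40)) = Real.exp (-((k/20)*(δ/2))) := by
    rw [Real.rpow_def_of_pos (by norm_num), hk]; ring_nf
  have e3 : (10:ℝ) ^ (δ/20) = Real.exp ((k/10)*(δ/2)) := by
    rw [Real.rpow_def_of_pos (by norm_num), hk]; ring_nf
  have e4 : (10:ℝ) ^ (-(δ/20)) = Real.exp (-((k/10)*(δ/2))) := by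
    rw [Real.rpow_def_of_pos (by norm_num), hk]; ring_nf
  rw [e1, e2, e3, e4]
  have h2B : (2:ℝ)^B ≠ 0 := by positivity
  have hπ : π ≠ 0 := Real.pi_ne_zero
  have hcval : (2 * π / 2 ^ B)⁻¹ = (2*c)⁻¹ := by rw [hc]; field_simp
  have h2Bval : (2:ℝ)^B = π / c := by rw [hc]; field_simp
  rw [hcval, h2Bval]
  have hcne : c ≠ 0 := ne_of_gt hcpos
  have hkne : k ≠ 0 := ne_of_gt hkpos
  field_simp
  ring
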